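/- Fix u, k, ω, σ > 0 and β > 0, and for λ > 0 define M(β; λ) := ½u²k [ sin(ωβ) exp(−½k²σ²(β + λ^{−1}(1 − e^{−λβ}))) − λ ∫₀^∞ exp(−λα − ½k²σ²(α + β + λ^{−1})) sin(ω(α+β)) sinh((k²σ²/(2λ)) e^{−λ(α+β)}) dα ]. Then M(β; λ) → ½u²k sin(ωβ) exp(−½k²σ²β) as λ → ∞. -/

import Mathlib

open MeasureTheory Real Set

/-- The paper's leading-order Stokes'-drift kernel `M(β)` for the elastic dumbbell,
with wave amplitude `u`, wavenumber `k`, frequency `ω`, noise strength `σ`,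
and spring constant `l` (the paper's `λ`). -/
noncomputable def stokesKernel (u k ω σ l β : ℝ) : ℝ :=
  (1 / 2) * u ^ 2 * k *
    (Real.sin (ω * β) *
        Real.exp (-(k ^ 2 * σ ^ 2 / 2) * (β + l⁻¹ * (1 - Real.exp (-(l * β))))) -
      l * ∫ α in Ioi (0 : ℝ),
        Real.exp (-(l * α) - k ^ 2 * σ ^ 2 / 2 * (α + β + l⁻¹)) * Real.sin (ω * (α + β)) *
          Real.sinh (k ^ 2 * σ ^ 2 / (2 * l) * Real.exp (-(l * (α + β)))))

lemma integral_exp_neg_mul_Ioi_zero {l : ℝ} (hl : 0 < l) :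
    (∫ x in Ioi (0 : ℝ), Real.exp (-(l * x))) = l⁻¹ := by
  have := integral_comp_mul_left_Ioi (fun x => Real.exp (-x)) 0 hl
  simp only [mul_zero, integral_exp_neg_Ioi_zero, smul_eq_mul, mul_one] at this
  simpa using this

lemma key_bound (k ω σ β : ℝ) (hk : 0 < k) (hσ : 0 < σ) (hβ : 0 < β)
    {l : ℝ} (hl : 0 < l) :
    ‖l * ∫ α in Ioi (0 : ℝ),
        Real.exp (-(l * α) - k ^ 2 * σ ^ 2 / 2 * (α + β + l⁻¹)) * Real.sin (ω * (α + β)) *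
          Real.sinh (k ^ 2 * σ ^ 2 / (2 * l) * Real.exp (-(l * (α + β))))‖
      ≤ Real.sinh (k ^ 2 * σ ^ 2 / (2 * l)) := by
  set c : ℝ := k ^ 2 * σ ^ 2 / (2 * l) with hc
  have hc0 : 0 ≤ c := by positivity
  have hg : IntegrableOn (fun α => Real.sinh c * Real.exp (-(l * α))) (Ioi (0 : ℝ)) := by
    have : IntegrableOn _ (Ioi (0 : ℝ)) := (exp_neg_integrableOn_Ioi 0 hl).const_mul (Real.sinh c)
    simpa [neg_mul] using this
  have hbound : ‖∫ α in Ioi (0 : ℝ),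
      Real.exp (-(l * α) - k ^ 2 * σ ^ 2 / 2 * (α + β + l⁻¹)) * Real.sin (ω * (α + β)) *
        Real.sinh (c * Real.exp (-(l * (α + β))))‖
      ≤ ∫ α in Ioi (0 : ℝ), Real.sinh c * Real.exp (-(l * α)) := by
    refine norm_integral_le_of_norm_le hg ?_
    filter_upwards [ae_restrict_mem measurableSet_Ioi] with α (hα : 0 < α)
    have harg0 : 0 ≤ c * Real.exp (-(l * (α + β))) := by positivity
    have harg1 : c * Real.exp (-(l * (α + β))) ≤ c := by
      have : Real.exp (-(l * (α + β))) ≤ 1 := by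
        apply Real.exp_le_one_iff.mpr; nlinarith
      nlinarith
    have hsinh : ‖Real.sinh (c * Real.exp (-(l * (α + β))))‖ ≤ Real.sinh c := by
      rw [Real.norm_eq_abs, abs_of_nonneg (Real.sinh_nonneg_iff.mpr harg0)]
      exact Real.sinh_le_sinh.mpr harg1
    have hexp : ‖Real.exp (-(l * α) - k ^ 2 * σ ^ 2 / 2 * (α + β + l⁻¹))‖
        ≤ Real.exp (-(l * α)) := by
      rw [Real.norm_eq_abs, Real.abs_exp]
      apply Real.exp_le_exp.mpr
      have h1 : 0 ≤ k ^ 2 * σ ^ 2 / 2 * (α + β + l⁻¹) := by positivity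
      linarith
    have hsin : ‖Real.sin (ω * (α + β))‖ ≤ 1 := by
      rw [Real.norm_eq_abs]; exact Real.abs_sin_le_one _
    calc ‖Real.exp (-(l * α) - k ^ 2 * σ ^ 2 / 2 * (α + β + l⁻¹)) * Real.sin (ω * (α + β)) *
            Real.sinh (c * Real.exp (-(l * (α + β))))‖
        = ‖Real.exp (-(l * α) - k ^ 2 * σ ^ 2 / 2 * (α + β + l⁻¹))‖ *
            ‖Real.sin (ω * (α + β))‖ * ‖Real.sinh (c * Real.exp (-(l * (α + β))))‖ := by
          simp [norm_mul]
      _ ≤ Real.exp (-(l * α)) * 1 * Real.sinh c := by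
          gcongr <;> positivity
      _ = Real.sinh c * Real.exp (-(l * α)) := by ring
  have hint : ∫ α in Ioi (0 : ℝ), Real.sinh c * Real.exp (-(l * α)) = Real.sinh c * l⁻¹ := by
    rw [integral_const_mul, integral_exp_neg_mul_Ioi_zero hl]
  rw [norm_mul, Real.norm_eq_abs l, abs_of_pos hl]
  calc l * ‖∫ α in Ioi (0 : ℝ),
        Real.exp (-(l * α) - k ^ 2 * σ ^ 2 / 2 * (α + β + l⁻¹)) * Real.sin (ω * (α + β)) *
          Real.sinh (c * Real.exp (-(l * (α + β))))‖
      ≤ l * (Real.sinh c * l⁻¹) := by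
        rw [← hint]; exact mul_le_mul_of_nonneg_left hbound hl.le
    _ = Real.sinh c := by field_simp

/-- Strong-spring pointwise limit of the Stokes'-drift kernel: as the spring constant
tends to infinity, the kernel reduces to that of a single point particle of
diffusivity half sigma squared. -/
theorem stokesKernel_tendsto_strong_spring (u k ω σ β : ℝ)
    (hu : 0 < u) (hk : 0 < k) (hω : 0 < ω) (hσ : 0 < σ) (hβ : 0 < β) :
    Filter.Tendsto (fun l : ℝ => stokesKernel u k ω σ l β) Filter.atTop
      (nhds ((1 / 2) * u ^ 2 * k * Real.sin (ω * β) *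
        Real.exp (-(k ^ 2 * σ ^ 2 / 2) * β))) := by
  have hA : Filter.Tendsto (fun l : ℝ => Real.sin (ω * β) *
      Real.exp (-(k ^ 2 * σ ^ 2 / 2) * (β + l⁻¹ * (1 - Real.exp (-(l * β)))))) Filter.atTop
      (nhds (Real.sin (ω * β) * Real.exp (-(k ^ 2 * σ ^ 2 / 2) * β))) := by
    have h1 : Filter.Tendsto (fun l : ℝ => l⁻¹ * (1 - Real.exp (-(l * β)))) Filter.atTop
        (nhds 0) := by
      have hinv : Filter.Tendsto (fun l : ℝ => l⁻¹) Filter.atTop (nhds 0) :=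
        tendsto_inv_atTop_zero
      have hexp : Filter.Tendsto (fun l : ℝ => 1 - Real.exp (-(l * β))) Filter.atTop
          (nhds (1 - 0)) := by
        apply Filter.Tendsto.const_sub
        apply Real.tendsto_exp_atBot.comp
        have : Filter.Tendsto (fun l : ℝ => l * β) Filter.atTop Filter.atTop :=
          Filter.Tendsto.atTop_mul_const hβ Filter.tendsto_id
        exact Filter.tendsto_neg_atBot_iff.mpr this
      simpa using hinv.mul hexp
    have h2 : Filter.Tendsto (fun l : ℝ => β + l⁻¹ * (1 - Real.exp (-(l * β)))) Filter.atTop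
        (nhds (β + 0)) := Filter.Tendsto.const_add _ h1
    rw [add_zero] at h2
    exact Filter.Tendsto.const_mul _
      ((Real.continuous_exp.tendsto _).comp (h2.const_mul _))
  have hB : Filter.Tendsto (fun l : ℝ => l * ∫ α in Ioi (0 : ℝ),
      Real.exp (-(l * α) - k ^ 2 * σ ^ 2 / 2 * (α + β + l⁻¹)) * Real.sin (ω * (α + β)) *
        Real.sinh (k ^ 2 * σ ^ 2 / (2 * l) * Real.exp (-(l * (α + β))))) Filter.atTop
      (nhds 0) := by
    refine squeeze_zero_norm' (a := fun l : ℝ => Real.sinh (k ^ 2 * σ ^ 2 / (2 * l))) ?_ ?_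
    · filter_upwards [Filter.eventually_gt_atTop (0 : ℝ)] with l hl
      exact key_bound k ω σ β hk hσ hβ hl
    · have harg : Filter.Tendsto (fun l : ℝ => k ^ 2 * σ ^ 2 / (2 * l)) Filter.atTop
          (nhds 0) := by
        apply Filter.Tendsto.div_atTop tendsto_const_nhds
        exact Filter.Tendsto.const_mul_atTop (by norm_num) Filter.tendsto_id
      have := (Real.continuous_sinh.tendsto 0).comp harg
      simpa [Function.comp_def] using this
  have := (hA.sub hB).const_mul ((1 / 2) * u ^ 2 * k)
  simp only [sub_zero] at this
  rw [show ((1 / 2) * u ^ 2 * k * Real.sin (ω * β) * Real.exp (-(k ^ 2 * σ ^ 2 / 2) * β))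
      = (1 / 2) * u ^ 2 * k * (Real.sin (ω * β) * Real.exp (-(k ^ 2 * σ ^ 2 / 2) * β)) from by
      ring]
  unfold stokesKernel
  exact this
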